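/- Let T > 0, I = (0,T) with one-dimensional Lebesgue measure, (Ω, μ) a finite measure space, and U := L²(I × Ω) with respect to the product measure. Let W be a real Hilbert space and ι : W → L²(Ω, μ) a compact bounded linear operator, and assume the truncation property: for every w ∈ W there exists w⁺ ∈ W with ι(w⁺) = max(ι w, 0) μ-a.e. and ⟨w, w⁺⟩_W ≤ ‖w‖²_W. Fix α, β, γ > 0, p ∈ (0,1). Assume f : U → ℝ is sequentially weakly lower semicontinuous, continuously Fréchet differentiable, and bounded below by a continuous affine functional. Let (ū, w̄) be a local solution of minimizing Φ(u,w) := f(u) + (α/2)‖u‖²_U + (β/2)‖w‖²_W + γ ∫_Ω |ι w|^p dμ over K := {(u,w) ∈ U × W : |u(t,x)| ≤ (ι w)(x) a.e.}, meaning (ū,w̄) ∈ K and there is ρ > 0 with Φ(ū,w̄) ≤ Φ(u,w) for all (u,w) ∈ K with ‖u−ū‖_U ≤ ρ and ‖w−w̄‖_W ≤ ρ. Then there exist λ̄ ∈ W* and μ̄¹, μ̄² ∈ U such that for all (v,z) ∈ U × W: f'(ū)v + α⟨ū, v⟩_U + β⟨w̄, z⟩_W + γ λ̄(z) + ⟨μ̄¹,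 E(ι z) − v⟩_U + ⟨μ̄², E(ι z) + v⟩_U = 0; moreover λ̄(w̄) = p ∫_Ω |ι w̄|^p dμ; and the complementarity conditions hold: μ̄¹ ≤ 0 a.e. on I × Ω, ⟨μ̄¹, E(ι w̄) − ū⟩_U = 0, μ̄² ≤ 0 a.e. on I × Ω, and ⟨μ̄², E(ι w̄) + ū⟩_U = 0. -/

import Mathlib

open MeasureTheory Filter

/-- The product measure on the time-space cylinder `I × Ω` with `I = (0,T)` carrying
one-dimensional Lebesgue measure. -/
noncomputable def timeSpaceMeasure {Ω : Type*} [MeasurableSpace Ω] (μ : Measure Ω)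
    (T : ℝ) : Measure (ℝ × Ω) :=
  (volume.restrict (Set.Ioo (0 : ℝ) T)).prod μ

section Aux
open Set Topology

lemma onesided_deriv_nonneg {G : ℝ → ℝ} {c : ℝ} (hG : HasDerivAt G c 0)
    (h : ∀ᶠ t in 𝓝[>] (0:ℝ), G 0 ≤ G t) : 0 ≤ c := by
  have h1 : HasDerivWithinAt G c (Set.Ioi 0) 0 := hG.hasDerivWithinAt
  rw [hasDerivWithinAt_iff_tendsto_slope] at h1
  rw [Set.diff_singleton_eq_self (by simp)] at h1
  refine ge_of_tendsto h1 ?_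
  filter_upwards [h, self_mem_nhdsWithin] with t ht ht'
  rw [slope_def_field]
  exact div_nonneg (sub_nonneg.2 ht) (by simpa using (le_of_lt (show (0:ℝ) < t from ht')))

variable {Ω : Type*} [MeasurableSpace Ω] {μ : Measure Ω} [IsFiniteMeasure μ] {T : ℝ}

lemma qmp_snd : Measure.QuasiMeasurePreserving Prod.snd (timeSpaceMeasure μ T) μ :=
  Measure.quasiMeasurePreserving_snd

omit [IsFiniteMeasure μ] in
lemma inner_L2_eq {δ : Type*} [MeasurableSpace δ] {ν : Measure δ} (f g : Lp ℝ 2 ν) :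
    (inner ℝ f g : ℝ) = ∫ q, f q * g q ∂ν := by
  rw [L2.inner_def]
  simp [RCLike.inner_apply, conj_trivial, mul_comm]

lemma E_norm_sq (hT : 0 < T) (Ey : Lp ℝ 2 (timeSpaceMeasure μ T)) (y : Lp ℝ 2 μ)
    (h : ⇑Ey =ᵐ[timeSpaceMeasure μ T] fun q => y q.2) : ‖Ey‖ ^ 2 = T * ‖y‖ ^ 2 := by
  have hmap : (timeSpaceMeasure μ T).map Prod.snd = (ENNReal.ofReal T) • μ := by
    rw [timeSpaceMeasure, Measure.map_snd_prod]
    congr 1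
    simp [Real.volume_Ioo]
  have hm : AEStronglyMeasurable (fun x => (y x) * (y x)) ((timeSpaceMeasure μ T).map Prod.snd) := by
    rw [hmap]
    exact ((Lp.aestronglyMeasurable y).mul (Lp.aestronglyMeasurable y)).smul_measure _
  have h1 : ‖Ey‖ ^ 2 = ∫ q, Ey q * Ey q ∂(timeSpaceMeasure μ T) := by
    rw [← real_inner_self_eq_norm_sq, inner_L2_eq]
  have h2 : ∫ q : ℝ × Ω, y q.2 * y q.2 ∂(timeSpaceMeasure μ T)
      = ∫ x, y x * y x ∂((timeSpaceMeasure μ T).map Prod.snd) :=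
    (integral_map measurable_snd.aemeasurable hm).symm
  rw [h1, integral_congr_ae (show (fun q => Ey q * Ey q) =ᵐ[timeSpaceMeasure μ T]
    fun q => y q.2 * y q.2 from h.mul h), h2, hmap, integral_smul_measure,
    ENNReal.toReal_ofReal hT.le, smul_eq_mul, ← inner_L2_eq, real_inner_self_eq_norm_sq]

lemma E_norm (hT : 0 < T) (Ey : Lp ℝ 2 (timeSpaceMeasure μ T)) (y : Lp ℝ 2 μ)
    (h : ⇑Ey =ᵐ[timeSpaceMeasure μ T] fun q => y q.2) : ‖Ey‖ = Real.sqrt T * ‖y‖ := by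
  rw [← Real.sqrt_sq (norm_nonneg Ey), E_norm_sq hT Ey y h, Real.sqrt_mul hT.le,
    Real.sqrt_sq (norm_nonneg y)]

lemma E_congr {E : Lp ℝ 2 μ → Lp ℝ 2 (timeSpaceMeasure μ T)}
    (hE : ∀ z : Lp ℝ 2 μ, ⇑(E z) =ᵐ[timeSpaceMeasure μ T] fun q => z q.2)
    {y₁ : Lp ℝ 2 μ} {v : Lp ℝ 2 (timeSpaceMeasure μ T)} {f : Ω → ℝ}
    (h12 : ⇑y₁ =ᵐ[μ] f) (hv : ⇑v =ᵐ[timeSpaceMeasure μ T] fun q => f q.2) :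
    E y₁ = v := by
  apply Lp.ext
  filter_upwards [hE y₁, qmp_snd.ae_eq h12, hv] with q h1 h2 h3
  simp only [Function.comp_apply] at h2
  rw [h1, h3]
  exact h2

lemma E_add {E : Lp ℝ 2 μ → Lp ℝ 2 (timeSpaceMeasure μ T)}
    (hE : ∀ z : Lp ℝ 2 μ, ⇑(E z) =ᵐ[timeSpaceMeasure μ T] fun q => z q.2)
    (y₁ y₂ : Lp ℝ 2 μ) : E (y₁ + y₂) = E y₁ + E y₂ := by
  refine E_congr hE (f := fun x => y₁ x + y₂ x) ?_ ?_
  · filter_upwards [Lp.coeFn_add y₁ y₂] with x hx; exact hx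
  · filter_upwards [Lp.coeFn_add (E y₁) (E y₂), hE y₁, hE y₂] with q h1 h2 h3
    rw [h1, Pi.add_apply, h2, h3]

lemma E_smul {E : Lp ℝ 2 μ → Lp ℝ 2 (timeSpaceMeasure μ T)}
    (hE : ∀ z : Lp ℝ 2 μ, ⇑(E z) =ᵐ[timeSpaceMeasure μ T] fun q => z q.2)
    (c : ℝ) (y : Lp ℝ 2 μ) : E (c • y) = c • E y := by
  refine E_congr hE (f := fun x => c * y x) ?_ ?_
  · filter_upwards [Lp.coeFn_smul c y] with x hx; exact hx
  · filter_upwards [Lp.coeFn_smul c (E y), hE y] with q h1 h2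
    rw [h1, Pi.smul_apply, h2, smul_eq_mul]

end Aux

set_option maxHeartbeats 2000000 in
/-- First-order necessary optimality condition for the spatially sparse problem:
if `(ū,w̄)` is a local solution of minimizing
`Φ(u,w) = f(u) + (α/2)‖u‖²_U + (β/2)‖w‖²_W + γ ∫_Ω |ι w|^p dμ` over
`K = {(u,w) : |u(t,x)| ≤ (ι w)(x) a.e.}`, then there exist `λ̄ ∈ W*` and
`μ̄¹, μ̄² ∈ U` such that for all `(v,z) ∈ U × W`
`f'(ū)v + α⟨ū,v⟩ + β⟨w̄,z⟩ + γλ̄(z) + ⟨μ̄¹, E(ιz) − v⟩ + ⟨μ̄², E(ιz) + v⟩ = 0`,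
`λ̄(w̄) = p ∫ |ι w̄|^p dμ`, and the complementarity conditions hold. Here `E` denotes the
constant-in-time extension operator and `W` enjoys the truncation property. -/
theorem necessary_optimality_condition {Ω W : Type*} [MeasurableSpace Ω]
    (μ : Measure Ω) [IsFiniteMeasure μ] (T : ℝ) (hT : 0 < T)
    [NormedAddCommGroup W] [InnerProductSpace ℝ W] [CompleteSpace W]
    (ι : W →L[ℝ] Lp ℝ 2 μ) (hι : IsCompactOperator ι)
    (htrunc : ∀ w : W, ∃ wp : W,
      (⇑(ι wp) =ᵐ[μ] fun x => max ((ι w) x) 0) ∧ (inner ℝ w wp : ℝ) ≤ ‖w‖ ^ 2)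
    (α β γ p : ℝ) (hα : 0 < α) (hβ : 0 < β) (hγ : 0 < γ) (hp : p ∈ Set.Ioo (0 : ℝ) 1)
    (f : Lp ℝ 2 (timeSpaceMeasure μ T) → ℝ)
    (hlsc : ∀ (v : ℕ → Lp ℝ 2 (timeSpaceMeasure μ T)) (v₀ : Lp ℝ 2 (timeSpaceMeasure μ T)),
      (∀ z : Lp ℝ 2 (timeSpaceMeasure μ T),
        Tendsto (fun k => (inner ℝ (v k) z : ℝ)) atTop (nhds (inner ℝ v₀ z))) →
      ((f v₀ : EReal) ≤ liminf (fun k => ((f (v k) : ℝ) : EReal)) atTop))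
    (hbound : ∃ (g : Lp ℝ 2 (timeSpaceMeasure μ T) →L[ℝ] ℝ) (c : ℝ),
      ∀ u : Lp ℝ 2 (timeSpaceMeasure μ T), g u + c ≤ f u)
    (f' : Lp ℝ 2 (timeSpaceMeasure μ T) → (Lp ℝ 2 (timeSpaceMeasure μ T) →L[ℝ] ℝ))
    (hf' : ∀ u, HasFDerivAt f (f' u) u) (hf'cont : Continuous f')
    (E : Lp ℝ 2 μ → Lp ℝ 2 (timeSpaceMeasure μ T))
    (hE : ∀ z : Lp ℝ 2 μ, ⇑(E z) =ᵐ[timeSpaceMeasure μ T] fun q => z q.2)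
    (ubar : Lp ℝ 2 (timeSpaceMeasure μ T)) (wbar : W)
    (hadm : ∀ᵐ q ∂(timeSpaceMeasure μ T), |ubar q| ≤ (ι wbar) q.2)
    (ρ : ℝ) (hρ : 0 < ρ)
    (hloc : ∀ (u : Lp ℝ 2 (timeSpaceMeasure μ T)) (w : W),
      (∀ᵐ q ∂(timeSpaceMeasure μ T), |u q| ≤ (ι w) q.2) →
      ‖u - ubar‖ ≤ ρ → ‖w - wbar‖ ≤ ρ →
      f ubar + α / 2 * ‖ubar‖ ^ 2 + β / 2 * ‖wbar‖ ^ 2 +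
          γ * ∫ x, |(ι wbar) x| ^ p ∂μ ≤
        f u + α / 2 * ‖u‖ ^ 2 + β / 2 * ‖w‖ ^ 2 + γ * ∫ x, |(ι w) x| ^ p ∂μ) :
    ∃ (lam : W →L[ℝ] ℝ) (mu1 mu2 : Lp ℝ 2 (timeSpaceMeasure μ T)),
      (∀ (v : Lp ℝ 2 (timeSpaceMeasure μ T)) (z : W),
        f' ubar v + α * (inner ℝ ubar v : ℝ) + β * (inner ℝ wbar z : ℝ) + γ * lam z +
          (inner ℝ mu1 (E (ι z) - v) : ℝ) + (inner ℝ mu2 (E (ι z) + v) : ℝ) = 0) ∧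
      lam wbar = p * ∫ x, |(ι wbar) x| ^ p ∂μ ∧
      (∀ᵐ q ∂(timeSpaceMeasure μ T), mu1 q ≤ 0) ∧
      (inner ℝ mu1 (E (ι wbar) - ubar) : ℝ) = 0 ∧
      (∀ᵐ q ∂(timeSpaceMeasure μ T), mu2 q ≤ 0) ∧
      (inner ℝ mu2 (E (ι wbar) + ubar) : ℝ) = 0 := by
  classical
  obtain ⟨hp0, hp1⟩ := hp
  -- the Riesz representative of the smooth part of the derivative in `u`
  set g : Lp ℝ 2 (timeSpaceMeasure μ T) :=
    (InnerProductSpace.toDual ℝ (Lp ℝ 2 (timeSpaceMeasure μ T))).symm (f' ubar) + α • ubar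
    with hgdef
  have hg : ∀ v : Lp ℝ 2 (timeSpaceMeasure μ T),
      (inner ℝ g v : ℝ) = f' ubar v + α * (inner ℝ ubar v : ℝ) := by
    intro v
    rw [hgdef, inner_add_left, real_inner_smul_left, InnerProductSpace.toDual_symm_apply]
  set A : Lp ℝ 2 (timeSpaceMeasure μ T) := E (ι wbar) with hAdef
  have hA : ⇑A =ᵐ[timeSpaceMeasure μ T] fun q => (ι wbar) q.2 := hE (ι wbar)
  have hadmA : ∀ᵐ q ∂(timeSpaceMeasure μ T), |ubar q| ≤ A q := by
    filter_upwards [hadm, hA] with q h1 h2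
    rw [h2]; exact h1
  -- variational inequality
  have key : ∀ u : Lp ℝ 2 (timeSpaceMeasure μ T),
      (∀ᵐ q ∂(timeSpaceMeasure μ T), |u q| ≤ (ι wbar) q.2) →
      0 ≤ (inner ℝ g (u - ubar) : ℝ) := by
    intro u hu
    set d : Lp ℝ 2 (timeSpaceMeasure μ T) := u - ubar with hddef
    have hpath : HasDerivAt (fun t : ℝ => ubar + t • d) d 0 := by
      simpa using ((hasDerivAt_id (0:ℝ)).smul_const d).const_add ubar
    have hf1 : HasDerivAt (fun t : ℝ => f (ubar + t • d)) (f' ubar d) 0 := by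
      have h00 : ubar + (0:ℝ) • d = ubar := by simp
      have hF : HasFDerivAt f (f' ubar) (ubar + (0:ℝ) • d) := by rw [h00]; exact hf' ubar
      simpa [Function.comp_def] using hF.comp_hasDerivAt 0 hpath
    have hq : ∀ t : ℝ, f (ubar + t • d) + α/2 * ‖ubar + t • d‖^2
        = f (ubar + t • d)
          + (α/2*‖ubar‖^2 + (α * (inner ℝ ubar d : ℝ)) * t + α/2*‖d‖^2 * t^2) := by
      intro t
      rw [norm_add_sq_real, real_inner_smul_right, norm_smul, Real.norm_eq_abs, mul_pow, sq_abs]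
      ring
    have hpoly : HasDerivAt
        (fun t : ℝ => α/2*‖ubar‖^2 + (α * (inner ℝ ubar d : ℝ)) * t + α/2*‖d‖^2 * t^2)
        (α * (inner ℝ ubar d : ℝ)) 0 := by
      have ha : HasDerivAt (fun t : ℝ => (α * (inner ℝ ubar d : ℝ)) * t)
          (α * (inner ℝ ubar d : ℝ)) 0 := by
        simpa using (hasDerivAt_id (0:ℝ)).const_mul (α * (inner ℝ ubar d : ℝ))
      have hb : HasDerivAt (fun t : ℝ => α/2*‖d‖^2 * t^2) 0 0 := by
        simpa using (hasDerivAt_pow 2 (0:ℝ)).const_mul (α/2*‖d‖^2)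
      have := (ha.const_add (α/2*‖ubar‖^2)).add hb; rw [add_zero] at this; exact this
    have hG : HasDerivAt (fun t : ℝ => f (ubar + t • d) + α/2 * ‖ubar + t • d‖^2)
        (f' ubar d + α * (inner ℝ ubar d : ℝ)) 0 := by
      refine HasDerivAt.congr_of_eventuallyEq (hf1.add hpoly)
        (Eventually.of_forall fun t => hq t)
    have hGmin : ∀ᶠ t in nhdsWithin (0:ℝ) (Set.Ioi 0),
        f (ubar + (0:ℝ) • d) + α/2 * ‖ubar + (0:ℝ) • d‖^2
          ≤ f (ubar + t • d) + α/2 * ‖ubar + t • d‖^2 := by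
      set δ : ℝ := min 1 (ρ / (‖d‖ + 1)) with hδdef
      have hδ : 0 < δ := lt_min one_pos (div_pos hρ (by positivity))
      filter_upwards [Ioc_mem_nhdsGT hδ] with t ht
      obtain ⟨ht0, htδ⟩ := ht
      have ht1 : t ≤ 1 := le_trans htδ (min_le_left _ _)
      have hfeas : ∀ᵐ q ∂(timeSpaceMeasure μ T), |(ubar + t • d) q| ≤ (ι wbar) q.2 := by
        filter_upwards [Lp.coeFn_add ubar (t • d), Lp.coeFn_smul t d,
          Lp.coeFn_sub u ubar, hadm, hu] with q e1 e2 e3 a1 a2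
        rw [e1, Pi.add_apply, e2, Pi.smul_apply, smul_eq_mul, hddef, e3, Pi.sub_apply]
        calc |ubar q + t * (u q - ubar q)|
            = |(1-t) * ubar q + t * u q| := by ring_nf
          _ ≤ |(1-t) * ubar q| + |t * u q| := abs_add_le _ _
          _ = (1-t)*|ubar q| + t*|u q| := by
              rw [abs_mul, abs_mul, abs_of_nonneg (by linarith : (0:ℝ) ≤ 1 - t),
                abs_of_nonneg ht0.le]
          _ ≤ (1-t)*((ι wbar) q.2) + t*((ι wbar) q.2) :=
              add_le_add (mul_le_mul_of_nonneg_left a1 (by linarith))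
                (mul_le_mul_of_nonneg_left a2 ht0.le)
          _ = (ι wbar) q.2 := by ring
      have hnorm : ‖(ubar + t • d) - ubar‖ ≤ ρ := by
        rw [add_sub_cancel_left, norm_smul, Real.norm_eq_abs, abs_of_nonneg ht0.le]
        have h1 : t ≤ ρ / (‖d‖ + 1) := le_trans htδ (min_le_right _ _)
        have h2 : (0:ℝ) < ‖d‖ + 1 := by positivity
        calc t * ‖d‖ ≤ (ρ/(‖d‖+1)) * (‖d‖+1) := by nlinarith [norm_nonneg d]
          _ = ρ := by field_simp
      have hw : ‖wbar - wbar‖ ≤ ρ := by simp [hρ.le]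
      have hL := hloc (ubar + t • d) wbar hfeas hnorm hw
      have h00 : ubar + (0:ℝ) • d = ubar := by simp
      rw [h00]
      linarith
    have h0 := onesided_deriv_nonneg hG hGmin
    rw [hg d]
    exact h0
  -- scaling identity
  have hscal : (inner ℝ g ubar : ℝ) + β * ‖wbar‖ ^ 2
      + γ * (p * ∫ x, |(ι wbar) x| ^ p ∂μ) = 0 := by
    set Ip : ℝ := ∫ x, |(ι wbar) x| ^ p ∂μ with hIpdef
    have hpath : HasDerivAt (fun t : ℝ => (1+t) • ubar) ubar 0 := by
      simpa using (((hasDerivAt_id (0:ℝ)).const_add 1).smul_const ubar)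
    have hf2 : HasDerivAt (fun t : ℝ => f ((1+t) • ubar)) (f' ubar ubar) 0 := by
      have hF : HasFDerivAt f (f' ubar) ((1+(0:ℝ)) • ubar) := by
        rw [show ((1:ℝ)+0) • ubar = ubar by simp]; exact hf' ubar
      simpa [Function.comp_def] using hF.comp_hasDerivAt 0 hpath
    have hsq : HasDerivAt (fun t : ℝ => (1+t)^2) 2 0 := by
      have h := ((hasDerivAt_id (0:ℝ)).const_add 1).pow 2; simp at h; exact h
    have hrpow : HasDerivAt (fun t : ℝ => (1+t)^p) p 0 := by
      have h1 : HasDerivAt (fun x : ℝ => x ^ p) (p * (1:ℝ)^(p-1)) ((1:ℝ)+0) := by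
        rw [add_zero]
        exact Real.hasDerivAt_rpow_const (Or.inl one_ne_zero)
      have h2 : HasDerivAt (fun t : ℝ => 1 + t) 1 0 := by
        simpa using (hasDerivAt_id (0:ℝ)).const_add 1
      have h3 := HasDerivAt.comp (0:ℝ) h1 h2
      simp [Real.one_rpow] at h3; exact h3
    have hRHS : HasDerivAt (fun t : ℝ => f ((1+t) • ubar) + α/2 * ((1+t)^2 * ‖ubar‖^2)
        + β/2 * ((1+t)^2 * ‖wbar‖^2) + γ * ((1+t)^p * Ip))
        (f' ubar ubar + α/2 * (2 * ‖ubar‖^2) + β/2 * (2 * ‖wbar‖^2) + γ * (p * Ip)) 0 :=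
      ((hf2.add ((hsq.mul_const (‖ubar‖^2)).const_mul (α/2))).add
        ((hsq.mul_const (‖wbar‖^2)).const_mul (β/2))).add
        ((hrpow.mul_const Ip).const_mul γ)
    have hev : (fun t : ℝ => f ((1+t) • ubar) + α/2 * ‖(1+t) • ubar‖^2
        + β/2 * ‖(1+t) • wbar‖^2 + γ * ∫ x, |(ι ((1+t) • wbar)) x| ^ p ∂μ)
        =ᶠ[nhds (0:ℝ)] (fun t : ℝ => f ((1+t) • ubar) + α/2 * ((1+t)^2 * ‖ubar‖^2)
        + β/2 * ((1+t)^2 * ‖wbar‖^2) + γ * ((1+t)^p * Ip)) := by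
      filter_upwards [eventually_abs_sub_lt (0:ℝ) one_pos] with t ht
      rw [sub_zero] at ht
      obtain ⟨htl, htr⟩ := abs_lt.mp ht
      have ht' : (0:ℝ) < 1 + t := by linarith
      have e1 : ‖(1+t) • ubar‖^2 = (1+t)^2 * ‖ubar‖^2 := by
        rw [norm_smul, Real.norm_eq_abs, mul_pow, sq_abs]
      have e2 : ‖(1+t) • wbar‖^2 = (1+t)^2 * ‖wbar‖^2 := by
        rw [norm_smul, Real.norm_eq_abs, mul_pow, sq_abs]
      have e3 : ∫ x, |(ι ((1+t) • wbar)) x| ^ p ∂μ = (1+t)^p * Ip := by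
        have ha : ∀ᵐ x ∂μ, |(ι ((1+t) • wbar)) x| ^ p
            = (1+t)^p * (|(ι wbar) x| ^ p) := by
          rw [show ι ((1+t) • wbar) = (1+t) • ι wbar from ι.map_smul _ _]
          filter_upwards [Lp.coeFn_smul (1+t) (ι wbar)] with x hx
          rw [hx, Pi.smul_apply, smul_eq_mul, abs_mul, abs_of_pos ht',
            Real.mul_rpow ht'.le (abs_nonneg _)]
        rw [integral_congr_ae ha, integral_const_mul]
      rw [e1, e2, e3]
    have hmin : ∀ᶠ t in nhds (0:ℝ),
        f ((1+(0:ℝ)) • ubar) + α/2 * ‖(1+(0:ℝ)) • ubar‖^2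
          + β/2 * ‖(1+(0:ℝ)) • wbar‖^2
          + γ * ∫ x, |(ι ((1+(0:ℝ)) • wbar)) x| ^ p ∂μ
        ≤ f ((1+t) • ubar) + α/2 * ‖(1+t) • ubar‖^2
          + β/2 * ‖(1+t) • wbar‖^2 + γ * ∫ x, |(ι ((1+t) • wbar)) x| ^ p ∂μ := by
      have hδ : (0:ℝ) < min 1 (ρ / (‖ubar‖ + ‖wbar‖ + 1)) :=
        lt_min one_pos (div_pos hρ (by positivity))
      filter_upwards [eventually_abs_sub_lt (0:ℝ) hδ] with t ht
      rw [sub_zero] at ht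
      have ht1 : |t| < 1 := lt_of_lt_of_le ht (min_le_left _ _)
      have htρ : |t| ≤ ρ / (‖ubar‖ + ‖wbar‖ + 1) :=
        le_of_lt (lt_of_lt_of_le ht (min_le_right _ _))
      obtain ⟨htl, htr⟩ := abs_lt.mp ht1
      have ht' : (0:ℝ) < 1 + t := by linarith
      have hfeas : ∀ᵐ q ∂(timeSpaceMeasure μ T),
          |((1+t) • ubar) q| ≤ (ι ((1+t) • wbar)) q.2 := by
        have hμ' : ∀ᵐ x ∂μ, (ι ((1+t) • wbar)) x = (1+t) * (ι wbar) x := by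
          rw [show ι ((1+t) • wbar) = (1+t) • ι wbar from ι.map_smul _ _]
          filter_upwards [Lp.coeFn_smul (1+t) (ι wbar)] with x hx
          rw [hx, Pi.smul_apply, smul_eq_mul]
        filter_upwards [Lp.coeFn_smul (1+t) ubar, hadm, qmp_snd.ae hμ'] with q e1 a1 e2
        rw [e1, Pi.smul_apply, smul_eq_mul, e2, abs_mul, abs_of_pos ht']
        exact mul_le_mul_of_nonneg_left a1 ht'.le
      have hsumpos : (0:ℝ) < ‖ubar‖ + ‖wbar‖ + 1 := by positivity
      have hρeq : ρ / (‖ubar‖ + ‖wbar‖ + 1) * (‖ubar‖ + ‖wbar‖ + 1) = ρ := by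
        field_simp
      have hnu : ‖(1+t) • ubar - ubar‖ ≤ ρ := by
        have e : (1+t) • ubar - ubar = t • ubar := by
          have := (sub_smul (1+t) 1 ubar).symm
          simpa using this
        rw [e, norm_smul, Real.norm_eq_abs]
        nlinarith [norm_nonneg ubar, norm_nonneg wbar, abs_nonneg t]
      have hnw : ‖(1+t) • wbar - wbar‖ ≤ ρ := by
        have e : (1+t) • wbar - wbar = t • wbar := by
          have := (sub_smul (1+t) 1 wbar).symm
          simpa using this
        rw [e, norm_smul, Real.norm_eq_abs]
        nlinarith [norm_nonneg ubar, norm_nonneg wbar, abs_nonneg t]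
      have hL := hloc ((1+t) • ubar) ((1+t) • wbar) hfeas hnu hnw
      have h00 : ((1:ℝ)+0) = 1 := by norm_num
      rw [h00, one_smul, one_smul]
      linarith
    have hΨ : HasDerivAt (fun t : ℝ => f ((1+t) • ubar) + α/2 * ‖(1+t) • ubar‖^2
        + β/2 * ‖(1+t) • wbar‖^2 + γ * ∫ x, |(ι ((1+t) • wbar)) x| ^ p ∂μ)
        (f' ubar ubar + α/2 * (2 * ‖ubar‖^2) + β/2 * (2 * ‖wbar‖^2) + γ * (p * Ip)) 0 :=
      hRHS.congr_of_eventuallyEq hev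
    have hmin' : IsLocalMin (fun t : ℝ => f ((1+t) • ubar) + α/2 * ‖(1+t) • ubar‖^2
        + β/2 * ‖(1+t) • wbar‖^2 + γ * ∫ x, |(ι ((1+t) • wbar)) x| ^ p ∂μ) 0 := hmin
    have hD : f' ubar ubar + α/2 * (2 * ‖ubar‖^2) + β/2 * (2 * ‖wbar‖^2)
        + γ * (p * Ip) = 0 :=
      IsLocalMin.hasDerivAt_eq_zero hmin' hΨ
    rw [hg ubar, real_inner_self_eq_norm_sq]
    linarith
  -- pointwise complementarity from the variational inequality
  have hc12 : (∀ᵐ q ∂(timeSpaceMeasure μ T), max (g q) 0 * (A q + ubar q) = 0) ∧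
      (∀ᵐ q ∂(timeSpaceMeasure μ T), max (-(g q)) 0 * (A q - ubar q) = 0) := by
    obtain ⟨g', hg'm, hgg'⟩ : ∃ g'', StronglyMeasurable g''
        ∧ ⇑g =ᵐ[timeSpaceMeasure μ T] g'' :=
      ⟨_, (Lp.aestronglyMeasurable g).stronglyMeasurable_mk,
        (Lp.aestronglyMeasurable g).ae_eq_mk⟩
    obtain ⟨A', hA'm, hAA'⟩ : ∃ A'', StronglyMeasurable A''
        ∧ ⇑A =ᵐ[timeSpaceMeasure μ T] A'' :=
      ⟨_, (Lp.aestronglyMeasurable A).stronglyMeasurable_mk,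
        (Lp.aestronglyMeasurable A).ae_eq_mk⟩
    obtain ⟨u', hu'm, huu'⟩ : ∃ u'', StronglyMeasurable u''
        ∧ ⇑ubar =ᵐ[timeSpaceMeasure μ T] u'' :=
      ⟨_, (Lp.aestronglyMeasurable ubar).stronglyMeasurable_mk,
        (Lp.aestronglyMeasurable ubar).ae_eq_mk⟩
    set hfun : ℝ × Ω → ℝ :=
      fun q => if 0 < g' q then -A' q else if g' q < 0 then A' q else u' q with hhdef
    have hhsm : StronglyMeasurable hfun := by
      apply Measurable.stronglyMeasurable
      exact Measurable.ite (measurableSet_lt measurable_const hg'm.measurable)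
        hA'm.measurable.neg
        (Measurable.ite (measurableSet_lt hg'm.measurable measurable_const)
          hA'm.measurable hu'm.measurable)
    have hdom : MemLp (fun q => |A' q| + |u' q|) 2 (timeSpaceMeasure μ T) :=
      (((Lp.memLp A).ae_eq hAA').norm.add ((Lp.memLp ubar).ae_eq huu').norm)
    have hmem : MemLp hfun 2 (timeSpaceMeasure μ T) := by
      refine MemLp.of_le hdom hhsm.aestronglyMeasurable ?_
      refine Eventually.of_forall fun q => ?_
      simp only [hhdef, Real.norm_eq_abs]
      rw [abs_of_nonneg (by positivity : (0:ℝ) ≤ |A' q| + |u' q|)]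
      split_ifs
      · rw [abs_neg]; linarith [abs_nonneg (u' q)]
      · linarith [abs_nonneg (u' q)]
      · linarith [abs_nonneg (A' q)]
    set ustar : Lp ℝ 2 (timeSpaceMeasure μ T) := hmem.toLp hfun with hustardef
    have hustar : ⇑ustar =ᵐ[timeSpaceMeasure μ T] hfun := hmem.coeFn_toLp
    have hfeas : ∀ᵐ q ∂(timeSpaceMeasure μ T), |ustar q| ≤ (ι wbar) q.2 := by
      filter_upwards [hustar, hAA', huu', hadmA, hA] with q e1 eA eu aq hAq
      have hApos : 0 ≤ A q := le_trans (abs_nonneg _) aq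
      rw [e1, ← hAq]
      simp only [hhdef]
      split_ifs
      · rw [abs_neg, ← eA, abs_of_nonneg hApos]
      · rw [← eA, abs_of_nonneg hApos]
      · rw [← eu]; exact aq
    have hvi := key ustar hfeas
    have hNeq : (fun q => g q * ((ustar - ubar) q)) =ᵐ[timeSpaceMeasure μ T]
        (fun q => -(max (g q) 0 * (A q + ubar q)
          + max (-(g q)) 0 * (A q - ubar q))) := by
      filter_upwards [Lp.coeFn_sub ustar ubar, hustar, hgg', hAA', huu'] with q e1 e2 e3 eA eu
      rw [e1, Pi.sub_apply, e2, e3]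
      simp only [hhdef]
      split_ifs with h1 h2
      · rw [← eA, max_eq_left h1.le, max_eq_right (by linarith : -g' q ≤ 0)]
        ring
      · rw [← eA, max_eq_right (not_lt.mp h1), max_eq_left (by linarith : (0:ℝ) ≤ -g' q)]
        ring
      · rw [← eu, show g' q = 0 from le_antisymm (not_lt.mp h1) (not_lt.mp h2)]
        simp
    have hint : Integrable (fun q => g q * ((ustar - ubar) q)) (timeSpaceMeasure μ T) := by
      have := L2.integrable_inner (𝕜 := ℝ) g (ustar - ubar)
      simpa [RCLike.inner_apply, conj_trivial, mul_comm] using this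
    have hNint : Integrable (fun q => max (g q) 0 * (A q + ubar q)
        + max (-(g q)) 0 * (A q - ubar q)) (timeSpaceMeasure μ T) := by
      have h0 := (hint.congr hNeq).neg
      exact h0.congr (Eventually.of_forall fun q => by simp)
    have hN0 : ∫ q, (max (g q) 0 * (A q + ubar q)
        + max (-(g q)) 0 * (A q - ubar q)) ∂(timeSpaceMeasure μ T) ≤ 0 := by
      have h1 : (inner ℝ g (ustar - ubar) : ℝ)
          = ∫ q, g q * ((ustar - ubar) q) ∂(timeSpaceMeasure μ T) := inner_L2_eq _ _
      have h2 : ∫ q, g q * ((ustar - ubar) q) ∂(timeSpaceMeasure μ T)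
          = - ∫ q, (max (g q) 0 * (A q + ubar q)
            + max (-(g q)) 0 * (A q - ubar q)) ∂(timeSpaceMeasure μ T) := by
        rw [integral_congr_ae hNeq, integral_neg]
      linarith [hvi]
    have hNnn : ∀ᵐ q ∂(timeSpaceMeasure μ T),
        0 ≤ max (g q) 0 * (A q + ubar q) + max (-(g q)) 0 * (A q - ubar q) := by
      filter_upwards [hadmA] with q aq
      obtain ⟨a1, a2⟩ := abs_le.mp aq
      have h1 : 0 ≤ A q + ubar q := by linarith
      have h2 : 0 ≤ A q - ubar q := by linarith
      exact add_nonneg (mul_nonneg (le_max_right _ _) h1)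
        (mul_nonneg (le_max_right _ _) h2)
    have hNzero : ∀ᵐ q ∂(timeSpaceMeasure μ T),
        max (g q) 0 * (A q + ubar q) + max (-(g q)) 0 * (A q - ubar q) = 0 := by
      have hge : 0 ≤ ∫ q, (max (g q) 0 * (A q + ubar q)
          + max (-(g q)) 0 * (A q - ubar q)) ∂(timeSpaceMeasure μ T) :=
        integral_nonneg_of_ae hNnn
      have hzero := le_antisymm hN0 hge
      exact (integral_eq_zero_iff_of_nonneg_ae hNnn hNint).mp hzero
    constructor
    · filter_upwards [hNzero, hadmA] with q hz aq
      obtain ⟨a1, a2⟩ := abs_le.mp aq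
      have h1 : 0 ≤ max (g q) 0 * (A q + ubar q) :=
        mul_nonneg (le_max_right _ _) (by linarith)
      have h2 : 0 ≤ max (-(g q)) 0 * (A q - ubar q) :=
        mul_nonneg (le_max_right _ _) (by linarith)
      linarith
    · filter_upwards [hNzero, hadmA] with q hz aq
      obtain ⟨a1, a2⟩ := abs_le.mp aq
      have h1 : 0 ≤ max (g q) 0 * (A q + ubar q) :=
        mul_nonneg (le_max_right _ _) (by linarith)
      have h2 : 0 ≤ max (-(g q)) 0 * (A q - ubar q) :=
        mul_nonneg (le_max_right _ _) (by linarith)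
      linarith
  obtain ⟨hc1, hc2⟩ := hc12
  -- the multipliers
  set mu1 : Lp ℝ 2 (timeSpaceMeasure μ T) := -(Lp.negPart g) with hmu1def
  set mu2 : Lp ℝ 2 (timeSpaceMeasure μ T) := -(Lp.posPart g) with hmu2def
  have hmu1 : ⇑mu1 =ᵐ[timeSpaceMeasure μ T] fun q => min (g q) 0 := by
    filter_upwards [Lp.coeFn_neg (Lp.negPart g), Lp.coeFn_negPart g] with q h1 h2
    rw [hmu1def, h1, Pi.neg_apply, h2, neg_neg]
  have hmu2 : ⇑mu2 =ᵐ[timeSpaceMeasure μ T] fun q => -(max (g q) 0) := by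
    filter_upwards [Lp.coeFn_neg (Lp.posPart g), Lp.coeFn_posPart g] with q h1 h2
    rw [hmu2def, h1, Pi.neg_apply, h2]
  have hsub : mu1 - mu2 = g := by
    apply Lp.ext
    filter_upwards [Lp.coeFn_sub mu1 mu2, hmu1, hmu2] with q h1 h2 h3
    rw [h1, Pi.sub_apply, h2, h3, sub_neg_eq_add, min_add_max, add_zero]
  have hmu1neg : ∀ᵐ q ∂(timeSpaceMeasure μ T), mu1 q ≤ 0 := by
    filter_upwards [hmu1] with q h; rw [h]; exact min_le_right _ _
  have hmu2neg : ∀ᵐ q ∂(timeSpaceMeasure μ T), mu2 q ≤ 0 := by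
    filter_upwards [hmu2] with q h; rw [h]; simp [le_max_right]
  have hminmax : ∀ a : ℝ, min a 0 = -(max (-a) 0) := by
    intro a
    rcases le_total a 0 with h | h
    · rw [min_eq_left h, max_eq_left (by linarith), neg_neg]
    · rw [min_eq_right h, max_eq_right (by linarith), neg_zero]
  have hcompA1 : (inner ℝ mu1 (A - ubar) : ℝ) = 0 := by
    rw [inner_L2_eq]
    have hz : (fun q => mu1 q * ((A - ubar) q))
        =ᵐ[timeSpaceMeasure μ T] (fun _ => (0:ℝ)) := by
      filter_upwards [hmu1, Lp.coeFn_sub A ubar, hc2] with q h1 h2 h3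
      rw [h1, h2, Pi.sub_apply, hminmax]
      calc -(max (-(g q)) 0) * (A q - ubar q)
          = -(max (-(g q)) 0 * (A q - ubar q)) := by ring
        _ = 0 := by rw [h3, neg_zero]
    rw [integral_congr_ae hz, integral_zero]
  have hcompA2 : (inner ℝ mu2 (A + ubar) : ℝ) = 0 := by
    rw [inner_L2_eq]
    have hz : (fun q => mu2 q * ((A + ubar) q))
        =ᵐ[timeSpaceMeasure μ T] (fun _ => (0:ℝ)) := by
      filter_upwards [hmu2, Lp.coeFn_add A ubar, hc1] with q h1 h2 h3
      rw [h1, h2, Pi.add_apply]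
      calc -(max (g q) 0) * (A q + ubar q)
          = -(max (g q) 0 * (A q + ubar q)) := by ring
        _ = 0 := by rw [h3, neg_zero]
    rw [integral_congr_ae hz, integral_zero]
  -- the multiplier on W
  set m : Lp ℝ 2 (timeSpaceMeasure μ T) := mu1 + mu2 with hmdef
  set C : ℝ := (1/γ) * (β * ‖wbar‖ + ‖m‖ * (Real.sqrt T * ‖ι‖)) with hCdef
  set lam : W →L[ℝ] ℝ := LinearMap.mkContinuous
    { toFun := fun z => -(1/γ) * (β * (inner ℝ wbar z : ℝ) + (inner ℝ m (E (ι z)) : ℝ))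
      map_add' := by
        intro z₁ z₂
        rw [show ι (z₁ + z₂) = ι z₁ + ι z₂ from map_add ι z₁ z₂, E_add hE,
          inner_add_right (𝕜 := ℝ), inner_add_right (𝕜 := ℝ)]
        ring
      map_smul' := by
        intro c z
        rw [show ι (c • z) = c • ι z from ι.map_smul c z, E_smul hE,
          real_inner_smul_right, real_inner_smul_right, RingHom.id_apply, smul_eq_mul]
        ring }
    C
    (by
      intro z
      dsimp only [LinearMap.coe_mk, AddHom.coe_mk]
      have h1 : ‖E (ι z)‖ = Real.sqrt T * ‖ι z‖ := E_norm hT _ _ (hE (ι z))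
      have h2 : |(inner ℝ m (E (ι z)) : ℝ)| ≤ ‖m‖ * (Real.sqrt T * (‖ι‖ * ‖z‖)) := by
        calc |(inner ℝ m (E (ι z)) : ℝ)| ≤ ‖m‖ * ‖E (ι z)‖ := abs_real_inner_le_norm _ _
          _ ≤ ‖m‖ * (Real.sqrt T * (‖ι‖ * ‖z‖)) := by
              rw [h1, ← mul_assoc, ← mul_assoc]
              exact mul_le_mul_of_nonneg_left (ι.le_opNorm z)
                (by positivity)
      have h3 : |β * (inner ℝ wbar z : ℝ)| ≤ β * (‖wbar‖ * ‖z‖) := by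
        rw [abs_mul, abs_of_pos hβ]
        exact mul_le_mul_of_nonneg_left (abs_real_inner_le_norm _ _) hβ.le
      have h4 : ‖(-(1/γ) * (β * (inner ℝ wbar z : ℝ) + (inner ℝ m (E (ι z)) : ℝ)) : ℝ)‖
          = (1/γ) * |β * (inner ℝ wbar z : ℝ) + (inner ℝ m (E (ι z)) : ℝ)| := by
        rw [Real.norm_eq_abs, abs_mul, abs_neg, abs_of_pos (by positivity : (0:ℝ) < 1/γ)]
      rw [h4, hCdef]
      have h5 : |β * (inner ℝ wbar z : ℝ) + (inner ℝ m (E (ι z)) : ℝ)|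
          ≤ β * (‖wbar‖ * ‖z‖) + ‖m‖ * (Real.sqrt T * (‖ι‖ * ‖z‖)) :=
        le_trans (abs_add_le _ _) (add_le_add h3 h2)
      have h6 : (0:ℝ) ≤ 1/γ := by positivity
      calc (1/γ) * |β * (inner ℝ wbar z : ℝ) + (inner ℝ m (E (ι z)) : ℝ)|
          ≤ (1/γ) * (β * (‖wbar‖ * ‖z‖) + ‖m‖ * (Real.sqrt T * (‖ι‖ * ‖z‖))) :=
            mul_le_mul_of_nonneg_left h5 h6
        _ = 1 / γ * (β * ‖wbar‖ + ‖m‖ * (Real.sqrt T * ‖ι‖)) * ‖z‖ := by ring)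
    with hlamdef
  have hlam_apply : ∀ z : W,
      lam z = -(1/γ) * (β * (inner ℝ wbar z : ℝ) + (inner ℝ m (E (ι z)) : ℝ)) := fun z => rfl
  refine ⟨lam, mu1, mu2, ?_, ?_, hmu1neg, hcompA1, hmu2neg, hcompA2⟩
  · intro v z
    have hlamz : γ * lam z = -(β * (inner ℝ wbar z : ℝ) + (inner ℝ m (E (ι z)) : ℝ)) := by
      rw [hlam_apply]
      field_simp
    have h1 : (inner ℝ mu1 (E (ι z) - v) : ℝ)
        = (inner ℝ mu1 (E (ι z)) : ℝ) - (inner ℝ mu1 v : ℝ) := inner_sub_right _ _ _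
    have h2 : (inner ℝ mu2 (E (ι z) + v) : ℝ)
        = (inner ℝ mu2 (E (ι z)) : ℝ) + (inner ℝ mu2 v : ℝ) := inner_add_right _ _ _
    have h3 : (inner ℝ mu1 (E (ι z)) : ℝ) + (inner ℝ mu2 (E (ι z)) : ℝ)
        = (inner ℝ m (E (ι z)) : ℝ) := (inner_add_left _ _ _).symm
    have h4 : (inner ℝ mu1 v : ℝ) - (inner ℝ mu2 v : ℝ) = (inner ℝ g v : ℝ) := by
      rw [← inner_sub_left, hsub]
    have h5 := hg v
    linarith
  · have h6 : (inner ℝ m A : ℝ) = (inner ℝ g ubar : ℝ) := by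
      have e1 : (inner ℝ mu1 A : ℝ) = (inner ℝ mu1 ubar : ℝ) := by
        have := hcompA1
        rw [inner_sub_right] at this
        linarith
      have e2 : (inner ℝ mu2 A : ℝ) = -(inner ℝ mu2 ubar : ℝ) := by
        have := hcompA2
        rw [inner_add_right] at this
        linarith
      have e3 : (inner ℝ m A : ℝ) = (inner ℝ mu1 A : ℝ) + (inner ℝ mu2 A : ℝ) :=
        inner_add_left _ _ _
      have e4 : (inner ℝ g ubar : ℝ) = (inner ℝ mu1 ubar : ℝ) - (inner ℝ mu2 ubar : ℝ) := by
        rw [← hsub, inner_sub_left]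
      linarith
    have h7 : lam wbar = -(1/γ) * (β * (inner ℝ wbar wbar : ℝ) + (inner ℝ m A : ℝ)) :=
      hlam_apply wbar
    rw [h7, h6, real_inner_self_eq_norm_sq]
    have h8 : (inner ℝ g ubar : ℝ)
        = -(β * ‖wbar‖ ^ 2) - γ * (p * ∫ x, |(ι wbar) x| ^ p ∂μ) := by linarith
    rw [h8]
    field_simp
    ring
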